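/- Suppose d·g(α)² is sufficiently large relative to σ (precisely, 4·d·g(α)²·(σ−1) > 2σ(σ+1)·log σ for all α in the range considered), with σ > 1, η > 0, A = 2√d·σ/(σ²−1), h(σ) = 2σ²·log σ/(σ²−1), and g(α) = (1+α)/2·η − ε with 0 < ε < η. Then the disparity function D(α) = Φ(z₊(α)) − Φ(z₋(α)), with z₊(α) = −A·g(α) + √((A/σ)²g(α)² + h(σ)/σ²) and z₋(α) = (A/σ)g(α) − √(A²g(α)² + h(σ)), is strictly convex in α. -/

import Mathlib

open Real Set

/-- Standard normal cumulative distribution function. -/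
noncomputable def stdNormalCDF (z : ℝ) : ℝ :=
  ∫ t in Set.Iic z, (Real.sqrt (2 * Real.pi))⁻¹ * Real.exp (-t ^ 2 / 2)

section AuxProof
open MeasureTheory

noncomputable def stdPdf (x : ℝ) : ℝ := (Real.sqrt (2 * Real.pi))⁻¹ * Real.exp (-x ^ 2 / 2)

lemma stdPdf_pos (x : ℝ) : 0 < stdPdf x := by
  unfold stdPdf
  have : (0:ℝ) < Real.sqrt (2 * Real.pi) := Real.sqrt_pos.2 (by positivity)
  positivity

lemma continuous_stdPdf : Continuous stdPdf := by
  unfold stdPdf; continuity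

lemma integrable_stdPdf : MeasureTheory.Integrable stdPdf := by
  have h : MeasureTheory.Integrable (fun t : ℝ => Real.exp (-(1/2) * t ^ 2)) :=
    integrable_exp_neg_mul_sq (by norm_num)
  have h2 := h.const_mul (Real.sqrt (2 * Real.pi))⁻¹
  refine h2.congr ?_
  filter_upwards with t
  unfold stdPdf
  ring_nf

lemma hasDerivAt_stdNormalCDF (x : ℝ) : HasDerivAt stdNormalCDF (stdPdf x) x := by
  have key : ∀ y : ℝ, stdNormalCDF y = stdNormalCDF 0 + ∫ t in (0:ℝ)..y, stdPdf t := by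
    intro y
    have := intervalIntegral.integral_Iic_sub_Iic (μ := volume) (f := stdPdf)
      (a := (0:ℝ)) (b := y) integrable_stdPdf.integrableOn integrable_stdPdf.integrableOn
    unfold stdNormalCDF stdPdf at *
    linarith [this]
  have hmain : HasDerivAt (fun y => stdNormalCDF 0 + ∫ t in (0:ℝ)..y, stdPdf t) (stdPdf x) x :=
    (intervalIntegral.integral_hasDerivAt_right
      (integrable_stdPdf.intervalIntegrable)
      (continuous_stdPdf.stronglyMeasurableAtFilter _ _)
      continuous_stdPdf.continuousAt).const_add _
  exact hmain.congr_of_eventuallyEq (Filter.EventuallyEq.of_eq (funext key))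

lemma hasDerivAt_stdPdf (x : ℝ) : HasDerivAt stdPdf (-x * stdPdf x) x := by
  unfold stdPdf
  have h1 : HasDerivAt (fun t : ℝ => -t ^ 2 / 2) (-x) x := by
    have := ((hasDerivAt_pow 2 x).neg).div_const 2
    simpa using this.congr_deriv (by ring)
  have h2 := (h1.exp).const_mul (Real.sqrt (2 * Real.pi))⁻¹
  exact h2.congr_deriv (by ring)

lemma stdPdf_lt (x y : ℝ) (hxy : x < y) (hy : y ≤ 0) : stdPdf x < stdPdf y := by
  unfold stdPdf
  have hsq : y ^ 2 < x ^ 2 := by nlinarith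
  have : (0:ℝ) < (Real.sqrt (2 * Real.pi))⁻¹ := by
    have : (0:ℝ) < Real.sqrt (2 * Real.pi) := Real.sqrt_pos.2 (by positivity)
    positivity
  exact mul_lt_mul_of_pos_left (Real.exp_lt_exp.2 (by linarith)) this

set_option maxHeartbeats 1000000 in
lemma aux_pos (σ A k h a s pp pm : ℝ) (hσ : 1 < σ) (hA : 0 < A) (hk : 0 < k)
    (hh : 0 < h) (ha : 0 < a) (hs0 : 0 < s) (hsq : s ^ 2 = a ^ 2 + h)
    (hsa : s < σ * a) (hpm : 0 < pm) (hppm : pm < pp) :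
    0 < pp * (A ^ 2 * k ^ 2 * h / (σ * s ^ 3) - (-a + s / σ) * (k * A * (a / (σ * s) - 1)) ^ 2)
      - pm * (-(A ^ 2 * k ^ 2 * h / s ^ 3) - (a / σ - s) * (k * A * (1 / σ - a / s)) ^ 2) := by
  have hσ0 : (0:ℝ) < σ := by linarith
  obtain rfl : h = s ^ 2 - a ^ 2 := by linarith
  have has : a < s := by nlinarith
  set B1 : ℝ := A ^ 2 * k ^ 2 * (s ^ 2 - a ^ 2) / (σ * s ^ 3)
      - (-a + s / σ) * (k * A * (a / (σ * s) - 1)) ^ 2 with hB1def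
  set B2 : ℝ := -(A ^ 2 * k ^ 2 * (s ^ 2 - a ^ 2) / s ^ 3)
      - (a / σ - s) * (k * A * (1 / σ - a / s)) ^ 2 with hB2def
  have hzp_neg : -a + s / σ < 0 := by
    rw [neg_add_lt_iff_lt_add, div_lt_iff₀ hσ0]
    nlinarith
  have hB1 : 0 < B1 := by
    rw [hB1def]
    have h1 : 0 < A ^ 2 * k ^ 2 * (s ^ 2 - a ^ 2) / (σ * s ^ 3) := by positivity
    have h2 : (0:ℝ) ≤ (k * A * (a / (σ * s) - 1)) ^ 2 := sq_nonneg _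
    nlinarith
  have key : B1 - B2 = k ^ 2 * A ^ 2 * ((σ + 1) / σ) * (s - a) *
      ((s + a) / s ^ 3 + (σ * a - s) * (σ * s - a) / (σ ^ 2 * s ^ 2)) := by
    rw [hB1def, hB2def]
    field_simp
    ring
  have hkey : 0 < B1 - B2 := by
    rw [key]
    have h1 : 0 < σ * a - s := by linarith
    have h2 : 0 < σ * s - a := by nlinarith
    have h3 : 0 < (s + a) / s ^ 3 := by positivity
    have h4 : 0 < (σ * a - s) * (σ * s - a) / (σ ^ 2 * s ^ 2) := by positivity
    have h5 : 0 < s - a := by linarith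
    have h6 : 0 < (s + a) / s ^ 3 + (σ * a - s) * (σ * s - a) / (σ ^ 2 * s ^ 2) := by linarith
    positivity
  nlinarith [mul_pos (sub_pos.2 hppm) hB1, mul_pos hpm hkey]

set_option maxHeartbeats 2000000 in
theorem stmt12 (d : ℕ) (σ η ε : ℝ) (hd : 1 ≤ d) (hσ : 1 < σ) (hη : 0 < η)
    (hε0 : 0 < ε) (hεη : ε < η)
    (A h : ℝ) (hA : A = 2 * Real.sqrt d * σ / (σ ^ 2 - 1))
    (hh : h = 2 * σ ^ 2 * Real.log σ / (σ ^ 2 - 1))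
    (g zp zm D : ℝ → ℝ)
    (hg : ∀ α, g α = (1 + α) / 2 * η - ε)
    (hsep : ∀ α ∈ Set.Ici (1 : ℝ),
      4 * d * (g α) ^ 2 * (σ - 1) > 2 * σ * (σ + 1) * Real.log σ)
    (hzp : ∀ α, zp α = -A * g α + Real.sqrt ((A / σ) ^ 2 * (g α) ^ 2 + h / σ ^ 2))
    (hzm : ∀ α, zm α = (A / σ) * g α - Real.sqrt (A ^ 2 * (g α) ^ 2 + h))
    (hD : ∀ α, D α = stdNormalCDF (zp α) - stdNormalCDF (zm α)) :
    StrictConvexOn ℝ (Set.Ici (1 : ℝ)) D := by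
  have hσ0 : (0:ℝ) < σ := by linarith
  have hσ2 : (0:ℝ) < σ ^ 2 - 1 := by nlinarith
  have hlog : 0 < Real.log σ := Real.log_pos hσ
  have hh0 : 0 < h := by rw [hh]; positivity
  have hdpos : (0:ℝ) < (d:ℝ) := by exact_mod_cast Nat.lt_of_lt_of_le Nat.zero_lt_one hd
  have hsd0 : (0:ℝ) < Real.sqrt d := Real.sqrt_pos.2 hdpos
  have hA0 : 0 < A := by rw [hA]; positivity
  have hsqd : (Real.sqrt d) ^ 2 = (d:ℝ) := Real.sq_sqrt (Nat.cast_nonneg d)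
  have hA2 : A ^ 2 = 4 * d * σ ^ 2 / (σ ^ 2 - 1) ^ 2 := by
    rw [hA, div_pow, show (2 * Real.sqrt d * σ) ^ 2 = 4 * ((Real.sqrt d) ^ 2) * σ ^ 2 by ring,
      hsqd]
  set k : ℝ := η / 2 with hk
  have hk0 : 0 < k := by rw [hk]; positivity
  -- derivative of g
  have hgd : ∀ α : ℝ, HasDerivAt g k α := by
    intro α
    have h1 : HasDerivAt (fun x : ℝ => (1 + x) / 2 * η - ε) k α := by
      have h2 : HasDerivAt (fun x : ℝ => x) 1 α := hasDerivAt_id α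
      have h3 := ((((h2.const_add 1).div_const 2).mul_const η).sub_const ε)
      exact h3.congr_deriv (by rw [hk]; ring)
    exact h1.congr_of_eventuallyEq (Filter.Eventually.of_forall fun y => hg y)
  -- the function s
  set s : ℝ → ℝ := fun x => Real.sqrt (A ^ 2 * g x ^ 2 + h) with hsdef
  have hq : ∀ x, 0 < A ^ 2 * g x ^ 2 + h := fun x => by positivity
  have hs0 : ∀ x, 0 < s x := fun x => Real.sqrt_pos.2 (hq x)
  have hssq : ∀ x, s x ^ 2 = A ^ 2 * g x ^ 2 + h := fun x => Real.sq_sqrt (hq x).le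
  have hsd : ∀ x, HasDerivAt s (A ^ 2 * g x * k / s x) x := by
    intro x
    have h1 : HasDerivAt (fun y => A ^ 2 * g y ^ 2 + h) (A ^ 2 * (2 * g x ^ 1 * k)) x :=
      (((hgd x).pow 2).const_mul (A ^ 2)).add_const h
    have h2 := h1.sqrt (ne_of_gt (hq x))
    refine h2.congr_deriv ?_
    show A ^ 2 * (2 * g x ^ 1 * k) / (2 * Real.sqrt (A ^ 2 * g x ^ 2 + h))
      = A ^ 2 * g x * k / s x
    rw [hsdef]
    field_simp
  -- rewrite zp and zm in terms of s
  have hzp' : ∀ x, zp x = -(A * g x) + s x / σ := by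
    intro x
    rw [hzp, hsdef]
    have e1 : (A / σ) ^ 2 * g x ^ 2 + h / σ ^ 2 = (A ^ 2 * g x ^ 2 + h) / σ ^ 2 := by
      field_simp
    rw [e1, Real.sqrt_div (by positivity), Real.sqrt_sq hσ0.le]
    ring
  have hzm' : ∀ x, zm x = A * g x / σ - s x := by
    intro x
    rw [hzm, hsdef]
    ring
  -- first derivatives of zp and zm
  set zp1 : ℝ → ℝ := fun x => k * A * (A * g x / (σ * s x) - 1) with hzp1def
  set zm1 : ℝ → ℝ := fun x => k * A * (1 / σ - A * g x / s x) with hzm1def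
  have hzpd : ∀ x, HasDerivAt zp (zp1 x) x := by
    intro x
    have h1 : HasDerivAt (fun y => -(A * g y) + s y / σ)
        (-(A * k) + (A ^ 2 * g x * k / s x) / σ) x :=
      (((hgd x).const_mul A).neg).add ((hsd x).div_const σ)
    have h2 := h1.congr_of_eventuallyEq (Filter.Eventually.of_forall fun y => hzp' y)
    refine h2.congr_deriv ?_
    rw [hzp1def]
    field_simp
    ring
  have hzmd : ∀ x, HasDerivAt zm (zm1 x) x := by
    intro x
    have h1 : HasDerivAt (fun y => A * g y / σ - s y)
        (A * k / σ - A ^ 2 * g x * k / s x) x :=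
      (((hgd x).const_mul A).div_const σ).sub (hsd x)
    have h2 := h1.congr_of_eventuallyEq (Filter.Eventually.of_forall fun y => hzm' y)
    refine h2.congr_deriv ?_
    rw [hzm1def]
    field_simp
  -- second derivatives
  have hzp1d : ∀ x, HasDerivAt zp1 (A ^ 2 * k ^ 2 * h / (σ * s x ^ 3)) x := by
    intro x
    have hne : σ * s x ≠ 0 := by positivity
    have h1 : HasDerivAt (fun y => A * g y) (A * k) x := (hgd x).const_mul A
    have h2 : HasDerivAt (fun y => σ * s y) (σ * (A ^ 2 * g x * k / s x)) x :=
      (hsd x).const_mul σ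
    have h3 := (h1.div h2 hne)
    have h4 := ((h3.sub_const 1).const_mul (k * A))
    refine h4.congr_deriv ?_
    have hh2 : h = s x ^ 2 - A ^ 2 * g x ^ 2 := by linarith [hssq x]
    rw [hh2]
    have hsne : s x ≠ 0 := (hs0 x).ne'
    field_simp
  have hzm1d : ∀ x, HasDerivAt zm1 (-(A ^ 2 * k ^ 2 * h / s x ^ 3)) x := by
    intro x
    have hne : s x ≠ 0 := (hs0 x).ne'
    have h1 : HasDerivAt (fun y => A * g y) (A * k) x := (hgd x).const_mul A
    have h3 := h1.div (hsd x) hne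
    have h4 := ((h3.const_sub (1 / σ)).const_mul (k * A))
    refine h4.congr_deriv ?_
    have hh2 : h = s x ^ 2 - A ^ 2 * g x ^ 2 := by linarith [hssq x]
    rw [hh2]
    field_simp
  -- first derivative of D
  set D1 : ℝ → ℝ := fun x => stdPdf (zp x) * zp1 x - stdPdf (zm x) * zm1 x with hD1def
  have hDd : ∀ x, HasDerivAt D (D1 x) x := by
    intro x
    have h1 : HasDerivAt (fun y => stdNormalCDF (zp y)) (stdPdf (zp x) * zp1 x) x :=
      (hasDerivAt_stdNormalCDF (zp x)).comp x (hzpd x)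
    have h2 : HasDerivAt (fun y => stdNormalCDF (zm y)) (stdPdf (zm x) * zm1 x) x :=
      (hasDerivAt_stdNormalCDF (zm x)).comp x (hzmd x)
    exact ((h1.sub h2).congr_of_eventuallyEq
      (Filter.Eventually.of_forall fun y => hD y))
  -- second derivative of D
  set D2 : ℝ → ℝ := fun x =>
      stdPdf (zp x) * (A ^ 2 * k ^ 2 * h / (σ * s x ^ 3) - zp x * zp1 x ^ 2)
    - stdPdf (zm x) * (-(A ^ 2 * k ^ 2 * h / s x ^ 3) - zm x * zm1 x ^ 2) with hD2def
  have hD1d : ∀ x, HasDerivAt D1 (D2 x) x := by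
    intro x
    have hp : HasDerivAt (fun y => stdPdf (zp y)) (-(zp x) * stdPdf (zp x) * zp1 x) x := by
      have := (hasDerivAt_stdPdf (zp x)).comp x (hzpd x)
      exact this.congr_deriv (by ring)
    have hm : HasDerivAt (fun y => stdPdf (zm y)) (-(zm x) * stdPdf (zm x) * zm1 x) x := by
      have := (hasDerivAt_stdPdf (zm x)).comp x (hzmd x)
      exact this.congr_deriv (by ring)
    have h1 := hp.mul (hzp1d x)
    have h2 := hm.mul (hzm1d x)
    have h3 := h1.sub h2
    refine h3.congr_deriv ?_
    rw [hD2def]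
    ring
  -- apply the convexity criterion
  apply strictConvexOn_of_deriv2_pos (convex_Ici 1)
  · exact fun x _ => (hDd x).differentiableAt.continuousAt.continuousWithinAt
  · intro x hx
    rw [interior_Ici] at hx
    have hiter : deriv^[2] D x = D2 x := by
      have e1 : deriv D = D1 := funext fun y => (hDd y).deriv
      show deriv (deriv D) x = D2 x
      rw [e1]
      exact (hD1d x).deriv
    rw [hiter]
    -- positivity of D2 at x
    have hx1 : (1:ℝ) < x := hx
    have hgx : 0 < g x := by rw [hg]; nlinarith
    have hsep' := hsep x (le_of_lt hx1)
    have h4d : 2 * Real.log σ < 4 * d * g x ^ 2 := by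
      nlinarith [mul_nonneg hlog.le (by nlinarith : (0:ℝ) ≤ σ ^ 2 + 1)]
    have hA2' : A ^ 2 * (σ ^ 2 - 1) ^ 2 = 4 * d * σ ^ 2 := by
      rw [hA2]; field_simp
    have hh' : h * (σ ^ 2 - 1) = 2 * σ ^ 2 * Real.log σ := by
      rw [hh]; field_simp
    have hsa : s x < σ * (A * g x) := by
      have h6 : h * (σ ^ 2 - 1) < (σ ^ 2 - 1) * ((σ ^ 2 - 1) * A ^ 2 * g x ^ 2) := by
        rw [hh']
        have e3 : (σ ^ 2 - 1) * ((σ ^ 2 - 1) * A ^ 2 * g x ^ 2) = 4 * d * σ ^ 2 * g x ^ 2 := by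
          linear_combination g x ^ 2 * hA2'
        rw [e3]
        nlinarith [h4d, mul_pos hσ0 hσ0]
      have h7 : h < (σ ^ 2 - 1) * A ^ 2 * g x ^ 2 := by nlinarith [h6, hσ2]
      have hlt : s x ^ 2 < (σ * (A * g x)) ^ 2 := by
        rw [hssq x]; nlinarith [h7]
      nlinarith [hs0 x, mul_pos hσ0 (mul_pos hA0 hgx), hlt]
    have has : A * g x < s x := by
      nlinarith [hssq x, hs0 x, mul_pos hA0 hgx]
    -- zp x and zm x values and ordering
    have hzpx := hzp' x
    have hzmx := hzm' x
    have hzpneg : zp x < 0 := by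
      rw [hzpx]
      have : s x / σ < A * g x := by rw [div_lt_iff₀ hσ0]; nlinarith
      linarith
    have hzmzp : zm x < zp x := by
      rw [hzpx, hzmx]
      have h1 : A * g x / σ < s x / σ := by
        apply div_lt_div_of_pos_right has hσ0
      linarith
    have hpdf : stdPdf (A * g x / σ - s x) < stdPdf (-(A * g x) + s x / σ) := by
      rw [← hzpx, ← hzmx]
      exact stdPdf_lt _ _ hzmzp hzpneg.le
    have haux := aux_pos σ A k h (A * g x) (s x)
      (stdPdf (-(A * g x) + s x / σ)) (stdPdf (A * g x / σ - s x))
      hσ hA0 hk0 hh0 (mul_pos hA0 hgx) (hs0 x) (by rw [hssq x]; ring) hsa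
      (stdPdf_pos _) hpdf
    have e2 : D2 x = stdPdf (-(A * g x) + s x / σ) *
          (A ^ 2 * k ^ 2 * h / (σ * s x ^ 3) - (-(A * g x) + s x / σ) *
            (k * A * (A * g x / (σ * s x) - 1)) ^ 2)
        - stdPdf (A * g x / σ - s x) * (-(A ^ 2 * k ^ 2 * h / s x ^ 3)
            - (A * g x / σ - s x) * (k * A * (1 / σ - A * g x / s x)) ^ 2) := by
      simp only [hD2def, hzp1def, hzm1def]
      rw [hzpx, hzmx]
    rw [e2]
    exact haux

end AuxProof
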